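/- arXiv:2509.09566 — 2 statements merged into one kernel-verified Lean document; each statement's English description precedes it below -/
import Mathlib

section
/- Let m : ℝ^d → (0,∞) be a smooth positive density and let J : ℝ^d → Mat(d,ℝ) be a smooth matrix field with J(x) antisymmetric for all x, satisfying div(m J∇f) = 0 on ℝ^d for every smooth f. Let g : ℝ^d → ℝ be smooth and nowhere vanishing, and assume the density g·m also satisfies the unimodularity condition: div(g m J∇f) = 0 for every smooth f. Then ⟨∇g(x), J(x)∇f(x)⟩ = 0 for every smooth f and every x; equivalently, J(x)∇g(x) = 0 for all x, i.e. g is a Casimir of the Poisson structure J. Hence an invariant density for J is unique up to multiplication by a nowhere-vanishing Casimir function. -/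
open MeasureTheory Real Matrix

/-- Gradient of `f : ℝ^d → ℝ` w.r.t. the standard inner product. -/
noncomputable def grad {d : ℕ} (f : (Fin d → ℝ) → ℝ) (x : Fin d → ℝ) : Fin d → ℝ :=
  fun i => fderiv ℝ f x (Pi.single i 1)

/-- Partial derivative `∂_{x_k} g (x)`. -/
noncomputable def pd {d : ℕ} (k : Fin d) (g : (Fin d → ℝ) → ℝ) (x : Fin d → ℝ) : ℝ :=
  fderiv ℝ g x (Pi.single k 1)

/-- Divergence of a vector field on ℝ^d: `div X = Σ_k ∂_{x_k} X_k`. -/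
noncomputable def vdiv {d : ℕ} (X : (Fin d → ℝ) → (Fin d → ℝ)) (x : Fin d → ℝ) : ℝ :=
  ∑ k, fderiv ℝ (fun y => X y k) x (Pi.single k 1)

lemma grad_contDiff {d : ℕ} {f : (Fin d → ℝ) → ℝ} (hf : ContDiff ℝ (⊤:ℕ∞) f) (j : Fin d) :
    ContDiff ℝ (⊤:ℕ∞) fun y => grad f y j := by
  simp only [grad]
  exact (hf.fderiv_right (m := (⊤:ℕ∞)) (by norm_cast)).clm_apply contDiff_const

/-- if `m` and `g·m` are both invariant (unimodular) densities for an
antisymmetric `J`, with `g` nowhere vanishing, then `g` is a Casimir: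
`⟨∇g, J∇f⟩ = 0` for all smooth `f`, equivalently `J∇g = 0`. -/
theorem invariant_density_unique_up_to_casimir {d : ℕ}
    (m g : (Fin d → ℝ) → ℝ) (J : (Fin d → ℝ) → Matrix (Fin d) (Fin d) ℝ)
    (hm : ContDiff ℝ (⊤ : ℕ∞) m) (hmpos : ∀ x, 0 < m x)
    (hJ : ∀ i j, ContDiff ℝ (⊤ : ℕ∞) fun x => J x i j)
    (hJanti : ∀ x, (J x)ᵀ = -J x)
    (huni : ∀ f : (Fin d → ℝ) → ℝ, ContDiff ℝ (⊤ : ℕ∞) f →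
      ∀ x, vdiv (fun y k => m y * (J y).mulVec (grad f y) k) x = 0)
    (hg : ContDiff ℝ (⊤ : ℕ∞) g) (hgne : ∀ x, g x ≠ 0)
    (hunig : ∀ f : (Fin d → ℝ) → ℝ, ContDiff ℝ (⊤ : ℕ∞) f →
      ∀ x, vdiv (fun y k => g y * m y * (J y).mulVec (grad f y) k) x = 0) :
    (∀ f : (Fin d → ℝ) → ℝ, ContDiff ℝ (⊤ : ℕ∞) f →
      ∀ x, grad g x ⬝ᵥ (J x).mulVec (grad f x) = 0) ∧
    (∀ x, (J x).mulVec (grad g x) = 0) := by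
  -- smoothness of X f y k = m y * (J y ∇f)_k
  have hXs : ∀ f : (Fin d → ℝ) → ℝ, ContDiff ℝ (⊤:ℕ∞) f → ∀ k,
      ContDiff ℝ (⊤:ℕ∞) fun y => m y * (J y).mulVec (grad f y) k := by
    intro f hf k
    apply hm.mul
    simp only [Matrix.mulVec, dotProduct]
    exact ContDiff.sum fun j _ => (hJ k j).mul (grad_contDiff hf j)
  have key : ∀ f : (Fin d → ℝ) → ℝ, ContDiff ℝ (⊤:ℕ∞) f →
      ∀ x, grad g x ⬝ᵥ (J x).mulVec (grad f x) = 0 := by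
    intro f hf x
    have h1 := huni f hf x
    have h2 := hunig f hf x
    have hexp : vdiv (fun y k => g y * m y * (J y).mulVec (grad f y) k) x
        = (∑ k, fderiv ℝ g x (Pi.single k 1) * (m x * (J x).mulVec (grad f x) k))
          + g x * vdiv (fun y k => m y * (J y).mulVec (grad f y) k) x := by
      unfold vdiv
      rw [Finset.mul_sum, ← Finset.sum_add_distrib]
      refine Finset.sum_congr rfl fun k _ => ?_
      have h3 : (fun y => g y * m y * (J y).mulVec (grad f y) k)
          = fun y => g y * (m y * (J y).mulVec (grad f y) k) := by
        funext y; ring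
      rw [h3, fderiv_fun_mul (hg.differentiable (by norm_cast)).differentiableAt
        ((hXs f hf k).differentiable (by norm_cast)).differentiableAt]
      simp only [ContinuousLinearMap.add_apply, ContinuousLinearMap.smul_apply,
        smul_eq_mul]
      ring
    rw [hexp, h1, mul_zero, add_zero] at h2
    have h4 : (∑ k, fderiv ℝ g x (Pi.single k 1) * (m x * (J x).mulVec (grad f x) k))
        = m x * (grad g x ⬝ᵥ (J x).mulVec (grad f x)) := by
      simp only [dotProduct, grad, Finset.mul_sum]
      refine Finset.sum_congr rfl fun k _ => by ring
    rw [h4] at h2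
    exact (mul_eq_zero.mp h2).resolve_left (hmpos x).ne'
  refine ⟨key, fun x => ?_⟩
  funext i
  -- use the coordinate function f_i y = y i
  have hfi : ContDiff ℝ (⊤:ℕ∞) (fun y : Fin d → ℝ => y i) :=
    (ContinuousLinearMap.proj i : (Fin d → ℝ) →L[ℝ] ℝ).contDiff
  have hgradfi : ∀ y, grad (fun y : Fin d → ℝ => y i) y = Pi.single i 1 := by
    intro y
    have hfd : fderiv ℝ (fun y : Fin d → ℝ => y i) y
        = (ContinuousLinearMap.proj i : (Fin d → ℝ) →L[ℝ] ℝ) :=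
      (ContinuousLinearMap.proj i : (Fin d → ℝ) →L[ℝ] ℝ).fderiv
    funext j
    simp only [grad, hfd, ContinuousLinearMap.proj_apply]
    simp [Pi.single_apply, eq_comm]
  have hk := key (fun y : Fin d → ℝ => y i) hfi x
  rw [hgradfi x] at hk
  -- hk : grad g x ⬝ᵥ J x .mulVec (Pi.single i 1) = 0, i.e. ∑ k ∇g k * J x k i = 0
  have hk' : ∑ k, grad g x k * J x k i = 0 := by
    rw [← hk]
    simp only [dotProduct, Matrix.mulVec, Pi.single_apply]
    refine Finset.sum_congr rfl fun k _ => ?_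
    congr 1
    simp [Finset.sum_ite_eq', mul_ite]
  have hanti : ∀ a b, J x a b = - J x b a := by
    intro a b
    have := congrFun (congrFun (hJanti x) b) a
    simpa [Matrix.transpose_apply] using this
  simp only [Matrix.mulVec, dotProduct, Pi.zero_apply]
  calc (∑ j, J x i j * grad g x j) = - ∑ j, grad g x j * J x j i := by
        rw [← Finset.sum_neg_distrib]
        refine Finset.sum_congr rfl fun j _ => ?_
        rw [hanti i j]; ring
    _ = 0 := by rw [hk', neg_zero]
end

section
/- Let m : ℝ^d → (0,∞) be a smooth positive density, E, S : ℝ^d → ℝ smooth, J : ℝ^d → Mat(d,ℝ) smooth, and K : ℝ^d → Mat(d,ℝ) smooth with K(x) symmetric for all x. Let ρ : ℝ^d → (0,∞) be smooth and positive and φ : ℝ^d → ℝ smooth with compact support. Then ∫_{ℝ^d} (Lφ)(x) ρ(x) m(x) dx = ∫_{ℝ^d} ⟨∇E(x), J(x)∇φ(x)⟩ ρ(x) m(x) dx + ∫_{ℝ^d} ⟨∇(S − log ρ)(x), K(x)∇φ(x)⟩ ρ(x) m(x) dx, where Lφ := ⟨∇E, J∇φ⟩ + ⟨∇S, K∇φ⟩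 + div_m(K∇φ). -/
open MeasureTheory Real Matrix Set

lemma contDiff_fderiv_apply {d : ℕ} {f : (Fin d → ℝ) → ℝ}
    (hf : ContDiff ℝ (⊤ : ℕ∞) f) (v : Fin d → ℝ) :
    ContDiff ℝ (⊤ : ℕ∞) (fun x => fderiv ℝ f x v) :=
  (hf.fderiv_right (le_refl _)).clm_apply contDiff_const

lemma grad_zero_outside {d : ℕ} {φ : (Fin d → ℝ) → ℝ} {x : Fin d → ℝ}
    (hx : x ∉ tsupport φ) : grad φ x = 0 := by
  have h : fderiv ℝ φ x = 0 := by
    by_contra h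
    exact hx (support_fderiv_subset ℝ h)
  funext i
  simp [grad, h]

lemma integral_pd_eq_zero {d : ℕ} (g : (Fin d → ℝ) → ℝ)
    (hg : ContDiff ℝ (⊤ : ℕ∞) g) (hgc : HasCompactSupport g) (k : Fin d) :
    ∫ x, fderiv ℝ g x (Pi.single k 1) = 0 := by
  obtain ⟨n, rfl⟩ : ∃ n, d = n + 1 := ⟨d - 1, by have := k.pos; omega⟩
  obtain ⟨r, hr⟩ := hgc.isCompact.isBounded.subset_closedBall 0
  set R : ℝ := |r| + 1 with hRdef
  have hcoord : ∀ x : Fin (n+1) → ℝ, x ∈ tsupport g → ∀ i, |x i| < R := by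
    intro x hx i
    have h1 : ‖x‖ ≤ r := by simpa [dist_zero_right] using hr hx
    have h2 : |x i| ≤ ‖x‖ := by
      simpa [Real.norm_eq_abs] using norm_le_pi_norm x i
    calc |x i| ≤ r := h2.trans h1
    _ ≤ |r| := le_abs_self r
    _ < R := by simp [hRdef]
  have hzero : ∀ x : Fin (n+1) → ℝ, (∃ i, R ≤ |x i|) → g x = 0 := by
    intro x ⟨i, hi⟩
    by_contra h
    exact absurd (hcoord x (subset_tsupport g h) i) (not_lt.2 hi)
  set a : Fin (n+1) → ℝ := fun _ => -R
  set b : Fin (n+1) → ℝ := fun _ => R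
  have hle : a ≤ b := by
    intro i; simp only [a, b]
    have : (0:ℝ) < R := by positivity
    linarith
  set f : Fin (n+1) → (Fin (n+1) → ℝ) → ℝ := fun i => if i = k then g else 0 with hf
  set f' : Fin (n+1) → (Fin (n+1) → ℝ) → (Fin (n+1) → ℝ) →L[ℝ] ℝ :=
    fun i x => if i = k then fderiv ℝ g x else 0 with hf'
  have hsum : ∀ x, (∑ i, f' i x (Pi.single i 1)) = fderiv ℝ g x (Pi.single k 1) := by
    intro x
    have : ∀ i : Fin (n+1), f' i x (Pi.single i 1)
        = if i = k then fderiv ℝ g x (Pi.single i 1) else 0 := by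
      intro i; simp only [hf']; split <;> simp
    simp only [this, Finset.sum_ite_eq' Finset.univ k]
    simp
  have hgcont : Continuous g := hg.continuous
  have key := MeasureTheory.integral_divergence_of_hasFDerivAt_off_countable'
    a b hle f f' ∅ countable_empty
    (fun i => by
      simp only [hf]; split
      · exact hgcont.continuousOn
      · exact continuousOn_const)
    (fun x _ i => by
      simp only [hf, hf']; split
      · exact (hg.differentiable (by simp) x).hasFDerivAt
      · exact hasFDerivAt_const 0 x)
    (by
      apply ContinuousOn.integrableOn_compact isCompact_Icc
      apply Continuous.continuousOn
      have : Continuous fun x => fderiv ℝ g x (Pi.single k 1) :=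
        (contDiff_fderiv_apply hg _).continuous
      exact continuous_finset_sum _ fun i _ => by
        simp only [hf']; split
        · subst ‹i = k›; exact this
        · exact continuous_const)
  simp only [hsum] at key
  have hfaces : ∀ i : Fin (n+1),
      ((∫ x in Icc (a ∘ i.succAbove) (b ∘ i.succAbove), f i (i.insertNth (b i) x))
        - ∫ x in Icc (a ∘ i.succAbove) (b ∘ i.succAbove), f i (i.insertNth (a i) x)) = 0 := by
    intro i
    simp only [hf]
    by_cases hik : i = k
    · subst hik
      have h1 : ∀ x : Fin n → ℝ, g (i.insertNth (b i) x) = 0 := fun x =>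
        hzero _ ⟨i, by rw [Fin.insertNth_apply_same]; exact le_abs_self R⟩
      have h2 : ∀ x : Fin n → ℝ, g (i.insertNth (a i) x) = 0 := fun x =>
        hzero _ ⟨i, by
          rw [Fin.insertNth_apply_same]
          show R ≤ |-R|
          rw [abs_neg]; exact le_abs_self R⟩
      simp [ite_apply, h1, h2]
    · simp [ite_apply, hik]
  rw [Finset.sum_eq_zero (fun i _ => hfaces i)] at key
  rw [← key]
  symm
  apply setIntegral_eq_integral_of_forall_compl_eq_zero
  intro x hx
  rcases Classical.em (x ∈ tsupport g) with hxs | hxs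
  · exfalso
    apply hx
    rw [Set.mem_Icc]
    constructor <;> intro i <;>
      [exact neg_le_of_abs_le (hcoord x hxs i).le; exact le_of_abs_le (hcoord x hxs i).le]
  · have : fderiv ℝ g x = 0 := by
      by_contra h
      exact hxs (support_fderiv_subset ℝ h)
    simp [this]



/-- the Fokker–Planck evolution is a deterministic GENERIC equation:
`∫ (Lφ) ρ m dx = ∫ ⟨∇E, J∇φ⟩ ρ m dx + ∫ ⟨∇(S − log ρ), K∇φ⟩ ρ m dx`, where
`Lφ = ⟨∇E, J∇φ⟩ + ⟨∇S, K∇φ⟩ + div_m(K∇φ)`. -/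
theorem fokker_planck_is_generic {d : ℕ}
    (m : (Fin d → ℝ) → ℝ) (E S : (Fin d → ℝ) → ℝ)
    (J K : (Fin d → ℝ) → Matrix (Fin d) (Fin d) ℝ)
    (ρ : (Fin d → ℝ) → ℝ) (φ : (Fin d → ℝ) → ℝ)
    (hm : ContDiff ℝ (⊤ : ℕ∞) m) (hmpos : ∀ x, 0 < m x)
    (hE : ContDiff ℝ (⊤ : ℕ∞) E) (hS : ContDiff ℝ (⊤ : ℕ∞) S)
    (hJ : ∀ i j, ContDiff ℝ (⊤ : ℕ∞) fun x => J x i j)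
    (hK : ∀ i j, ContDiff ℝ (⊤ : ℕ∞) fun x => K x i j)
    (hKsym : ∀ x, (K x)ᵀ = K x)
    (hρ : ContDiff ℝ (⊤ : ℕ∞) ρ) (hρpos : ∀ x, 0 < ρ x)
    (hφ : ContDiff ℝ (⊤ : ℕ∞) φ) (hφc : HasCompactSupport φ) :
    ∫ x, (grad E x ⬝ᵥ (J x).mulVec (grad φ x)
          + grad S x ⬝ᵥ (K x).mulVec (grad φ x)
          + vdiv (fun y k => m y * (K y).mulVec (grad φ y) k) x / m x) * (ρ x * m x)
      = (∫ x, (grad E x ⬝ᵥ (J x).mulVec (grad φ x)) * (ρ x * m x))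
        + ∫ x, (grad (fun y => S y - Real.log (ρ y)) x ⬝ᵥ (K x).mulVec (grad φ x))
            * (ρ x * m x) := by
  have hdiff : ∀ f : (Fin d → ℝ) → ℝ, ContDiff ℝ (⊤ : ℕ∞) f → Differentiable ℝ f :=
    fun f hf => hf.differentiable (by simp)
  -- smoothness of auxiliary functions
  have hVk : ∀ k, ContDiff ℝ (⊤ : ℕ∞) fun x => (K x).mulVec (grad φ x) k := by
    intro k
    have h : (fun x => (K x).mulVec (grad φ x) k)
        = fun x => ∑ j, K x k j * fderiv ℝ φ x (Pi.single j 1) := by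
      funext x; simp [Matrix.mulVec, dotProduct, grad]
    rw [h]
    exact ContDiff.sum fun j _ => (hK k j).mul (contDiff_fderiv_apply hφ _)
  have hYk : ∀ k, ContDiff ℝ (⊤ : ℕ∞) fun y => m y * (K y).mulVec (grad φ y) k :=
    fun k => hm.mul (hVk k)
  have hgk : ∀ k, ContDiff ℝ (⊤ : ℕ∞) fun y => ρ y * (m y * (K y).mulVec (grad φ y) k) :=
    fun k => hρ.mul (hYk k)
  have hgkc : ∀ k, HasCompactSupport fun y => ρ y * (m y * (K y).mulVec (grad φ y) k) := by
    intro k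
    apply HasCompactSupport.intro hφc
    intro x hx
    simp [grad_zero_outside hx, Matrix.mulVec_zero]
  have hSL : ContDiff ℝ (⊤ : ℕ∞) fun y => S y - Real.log (ρ y) :=
    hS.sub (hρ.log fun x => (hρpos x).ne')
  -- gradient of S - log ρ
  have hgradSL : ∀ x, grad (fun y => S y - Real.log (ρ y)) x
      = grad S x - (ρ x)⁻¹ • grad ρ x := by
    intro x
    have hS' : HasFDerivAt S (fderiv ℝ S x) x := (hdiff S hS x).hasFDerivAt
    have hρ' : HasFDerivAt ρ (fderiv ℝ ρ x) x := (hdiff ρ hρ x).hasFDerivAt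
    have hlog : HasFDerivAt (fun y => Real.log (ρ y)) ((ρ x)⁻¹ • fderiv ℝ ρ x) x := by
      exact (Real.hasDerivAt_log (hρpos x).ne').comp_hasFDerivAt x hρ'
    have hfd : fderiv ℝ (fun y => S y - Real.log (ρ y)) x
        = fderiv ℝ S x - (ρ x)⁻¹ • fderiv ℝ ρ x := (hS'.sub hlog).fderiv
    funext i
    simp [grad, hfd]
  -- integrability
  have hgradcont : ∀ (f : (Fin d → ℝ) → ℝ), ContDiff ℝ (⊤ : ℕ∞) f →
      ∀ i, Continuous fun x => grad f x i := by
    intro f hf i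
    exact (contDiff_fderiv_apply hf (Pi.single i 1)).continuous
  have hρmcont : Continuous fun x => ρ x * m x := hρ.continuous.mul hm.continuous
  have hdotcont : ∀ (u : (Fin d → ℝ) → (Fin d → ℝ))
      (M : (Fin d → ℝ) → Matrix (Fin d) (Fin d) ℝ),
      (∀ i, Continuous fun x => u x i) → (∀ i j, ContDiff ℝ (⊤ : ℕ∞) fun x => M x i j) →
      Continuous fun x => u x ⬝ᵥ (M x).mulVec (grad φ x) := by
    intro u M hu hM
    simp only [dotProduct, Matrix.mulVec]
    exact continuous_finset_sum _ fun i _ => (hu i).mul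
      (continuous_finset_sum _ fun j _ => (hM i j).continuous.mul (hgradcont φ hφ j))
  have hintdot : ∀ (u : (Fin d → ℝ) → (Fin d → ℝ))
      (M : (Fin d → ℝ) → Matrix (Fin d) (Fin d) ℝ),
      (∀ i, Continuous fun x => u x i) → (∀ i j, ContDiff ℝ (⊤ : ℕ∞) fun x => M x i j) →
      Integrable fun x => (u x ⬝ᵥ (M x).mulVec (grad φ x)) * (ρ x * m x) := by
    intro u M hu hM
    apply Continuous.integrable_of_hasCompactSupport
    · exact (hdotcont u M hu hM).mul hρmcont
    · apply HasCompactSupport.intro hφc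
      intro x hx
      simp [grad_zero_outside hx, Matrix.mulVec_zero]
  have hF1 : Integrable fun x => (grad E x ⬝ᵥ (J x).mulVec (grad φ x)) * (ρ x * m x) :=
    hintdot (grad E) J (hgradcont E hE) hJ
  have hF2 : Integrable fun x => (grad (fun y => S y - Real.log (ρ y)) x
      ⬝ᵥ (K x).mulVec (grad φ x)) * (ρ x * m x) :=
    hintdot _ K (hgradcont _ hSL) hK
  have hint3 : ∀ k, Integrable fun x =>
      fderiv ℝ (fun y => ρ y * (m y * (K y).mulVec (grad φ y) k)) x (Pi.single k 1) := by
    intro k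
    apply Continuous.integrable_of_hasCompactSupport
    · exact (contDiff_fderiv_apply (hgk k) _).continuous
    · exact ((hgkc k).fderiv ℝ).comp_left (g := fun L : (Fin d → ℝ) →L[ℝ] ℝ =>
        L (Pi.single k 1)) rfl
  have hF3 : Integrable fun x => ∑ k,
      fderiv ℝ (fun y => ρ y * (m y * (K y).mulVec (grad φ y) k)) x (Pi.single k 1) :=
    integrable_finset_sum _ fun k _ => hint3 k
  -- the divergence integral vanishes
  have hzero : ∫ x, (∑ k,
      fderiv ℝ (fun y => ρ y * (m y * (K y).mulVec (grad φ y) k)) x (Pi.single k 1)) = 0 := by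
    rw [integral_finset_sum _ fun k _ => hint3 k]
    exact Finset.sum_eq_zero fun k _ => integral_pd_eq_zero _ (hgk k) (hgkc k) k
  -- pointwise identity
  have hpt : ∀ x, (grad E x ⬝ᵥ (J x).mulVec (grad φ x)
          + grad S x ⬝ᵥ (K x).mulVec (grad φ x)
          + vdiv (fun y k => m y * (K y).mulVec (grad φ y) k) x / m x) * (ρ x * m x)
      = (grad E x ⬝ᵥ (J x).mulVec (grad φ x)) * (ρ x * m x)
        + (grad (fun y => S y - Real.log (ρ y)) x ⬝ᵥ (K x).mulVec (grad φ x)) * (ρ x * m x)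
        + ∑ k, fderiv ℝ (fun y => ρ y * (m y * (K y).mulVec (grad φ y) k)) x
            (Pi.single k 1) := by
    intro x
    have hm0 : m x ≠ 0 := (hmpos x).ne'
    have hρ0 : ρ x ≠ 0 := (hρpos x).ne'
    have e1 : grad (fun y => S y - Real.log (ρ y)) x ⬝ᵥ (K x).mulVec (grad φ x)
        = grad S x ⬝ᵥ (K x).mulVec (grad φ x)
          - (ρ x)⁻¹ * (grad ρ x ⬝ᵥ (K x).mulVec (grad φ x)) := by
      rw [hgradSL x, sub_dotProduct, smul_dotProduct, smul_eq_mul]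
    have hterm : ∀ k, fderiv ℝ (fun y => ρ y * (m y * (K y).mulVec (grad φ y) k)) x
          (Pi.single k 1)
        = ρ x * fderiv ℝ (fun y => m y * (K y).mulVec (grad φ y) k) x (Pi.single k 1)
          + (m x * (K x).mulVec (grad φ x) k) * grad ρ x k := by
      intro k
      rw [fderiv_fun_mul (hdiff ρ hρ x) (hdiff _ (hYk k) x)]
      simp [grad]
    have e2 : (∑ k, fderiv ℝ (fun y => ρ y * (m y * (K y).mulVec (grad φ y) k)) x
          (Pi.single k 1))
        = ρ x * vdiv (fun y k => m y * (K y).mulVec (grad φ y) k) x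
          + (grad ρ x ⬝ᵥ (K x).mulVec (grad φ x)) * m x := by
      rw [Finset.sum_congr rfl fun k _ => hterm k, Finset.sum_add_distrib, ← Finset.mul_sum]
      simp only [vdiv, dotProduct, Finset.sum_mul]
      congr 1
      exact Finset.sum_congr rfl fun k _ => by ring
    rw [e1, e2]
    field_simp
    ring
  -- assemble
  calc ∫ x, (grad E x ⬝ᵥ (J x).mulVec (grad φ x)
          + grad S x ⬝ᵥ (K x).mulVec (grad φ x)
          + vdiv (fun y k => m y * (K y).mulVec (grad φ y) k) x / m x) * (ρ x * m x)
      = ∫ x, ((grad E x ⬝ᵥ (J x).mulVec (grad φ x)) * (ρ x * m x)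
          + (grad (fun y => S y - Real.log (ρ y)) x ⬝ᵥ (K x).mulVec (grad φ x)) * (ρ x * m x)
          + ∑ k, fderiv ℝ (fun y => ρ y * (m y * (K y).mulVec (grad φ y) k)) x
              (Pi.single k 1)) :=
        integral_congr_ae (Filter.Eventually.of_forall hpt)
    _ = (∫ x, ((grad E x ⬝ᵥ (J x).mulVec (grad φ x)) * (ρ x * m x)
          + (grad (fun y => S y - Real.log (ρ y)) x ⬝ᵥ (K x).mulVec (grad φ x)) * (ρ x * m x)))
          + ∫ x, ∑ k, fderiv ℝ (fun y => ρ y * (m y * (K y).mulVec (grad φ y) k)) x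
              (Pi.single k 1) :=
        integral_add (hF1.add hF2) hF3
    _ = ((∫ x, (grad E x ⬝ᵥ (J x).mulVec (grad φ x)) * (ρ x * m x))
          + ∫ x, (grad (fun y => S y - Real.log (ρ y)) x ⬝ᵥ (K x).mulVec (grad φ x))
              * (ρ x * m x))
          + ∫ x, ∑ k, fderiv ℝ (fun y => ρ y * (m y * (K y).mulVec (grad φ y) k)) x
              (Pi.single k 1) := by
        rw [integral_add hF1 hF2]
    _ = (∫ x, (grad E x ⬝ᵥ (J x).mulVec (grad φ x)) * (ρ x * m x))
        + ∫ x, (grad (fun y => S y - Real.log (ρ y)) x ⬝ᵥ (K x).mulVec (grad φ x))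
            * (ρ x * m x) := by
        rw [hzero, add_zero]
end
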